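/- The exponential generating function of the sequence d_n, where d_n is the sum over ordered compositions (k_1,...,k_t) of n with all parts k_i ≥ 2 of (n!/(k_1!⋯k_t!))·∏(k_i − 1) (and d_0 = 1, d_1 = 0), equals e^{−x}/(1−x); that is, ∑_{n≥0} d_n x^n / n! = e^{−x}/(1−x) as formal power series. -/

import Mathlib

/-!
STATEMENT 2: Let `d_n` be the sum over ordered compositions `(k_1,...,k_t)` of `n` with all parts
`k_i ≥ 2` of `(n!/(k_1!⋯k_t!))·∏(k_i − 1)` (so `d_0 = 1`, `d_1 = 0`).  Then the exponential
generating function `∑_{n≥0} d_n x^n / n!` equals `e^{−x}/(1−x)` in `ℚ⟦X⟧`.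
Here `e^{-x} = rescale (-1) (exp ℚ)` and `1/(1-x) = PowerSeries.mk (fun _ => 1)`.
-/

open Finset PowerSeries

/-- `d n` : the number of "decorated compositions" from the paper's formula. -/
noncomputable def compositionCount (n : ℕ) : ℕ :=
  ∑ c ∈ Finset.univ.filter (fun c : Composition n => ∀ k ∈ c.blocks, 2 ≤ k),
    (Nat.factorial n / (c.blocks.map Nat.factorial).prod) *
      (c.blocks.map (fun k => k - 1)).prod

/-- the weight of a block -/
noncomputable def wq (k : ℕ) : ℚ := ((k : ℚ) - 1) / (k.factorial : ℚ)

/-- the normalized count `compositionCount n / n!` in closed combinatorial form -/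
noncomputable def qq (n : ℕ) : ℚ :=
  ∑ c ∈ Finset.univ.filter (fun c : Composition n => ∀ k ∈ c.blocks, 2 ≤ k),
    (c.blocks.map wq).prod

lemma prod_fac_dvd (l : List ℕ) : (l.map Nat.factorial).prod ∣ l.sum.factorial := by
  induction l with
  | nil => simp
  | cons a t ih =>
    simp only [List.map_cons, List.prod_cons, List.sum_cons]
    exact (mul_dvd_mul_left (a.factorial) ih).trans
      (Nat.factorial_mul_factorial_dvd_factorial_add a t.sum)

lemma prod_wq (l : List ℕ) (hl : ∀ k ∈ l, 2 ≤ k) :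
    (l.map wq).prod =
      ((l.map (fun k => k - 1)).prod : ℕ) / ((l.map Nat.factorial).prod : ℕ) := by
  induction l with
  | nil => simp
  | cons a t ih =>
    have ha : 2 ≤ a := hl a (by simp)
    have ht := ih (fun k hk => hl k (List.mem_cons_of_mem _ hk))
    simp only [List.map_cons, List.prod_cons, Nat.cast_mul, ht, wq]
    have : ((a - 1 : ℕ) : ℚ) = (a : ℚ) - 1 := by
      rw [Nat.cast_sub (by omega), Nat.cast_one]
    rw [← this, div_mul_div_comm]

lemma prod_fac_pos (l : List ℕ) : 0 < (l.map Nat.factorial).prod := by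
  induction l with
  | nil => simp
  | cons a t ih =>
    simp only [List.map_cons, List.prod_cons]
    exact Nat.mul_pos a.factorial_pos ih

lemma compositionCount_div (n : ℕ) :
    (compositionCount n : ℚ) / (n.factorial : ℚ) = qq n := by
  rw [compositionCount, qq, Nat.cast_sum, Finset.sum_div]
  refine Finset.sum_congr rfl fun c hc => ?_
  have hc' : ∀ k ∈ c.blocks, 2 ≤ k := (Finset.mem_filter.1 hc).2
  have hdvd : (c.blocks.map Nat.factorial).prod ∣ n.factorial := by
    simpa [c.blocks_sum] using prod_fac_dvd c.blocks
  have hP : ((c.blocks.map Nat.factorial).prod : ℚ) ≠ 0 := by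
    exact_mod_cast (prod_fac_pos c.blocks).ne'
  have hfac : ((n.factorial : ℕ) : ℚ) ≠ 0 := by
    exact_mod_cast n.factorial_pos.ne'
  rw [prod_wq c.blocks hc', Nat.cast_mul, Nat.cast_div hdvd hP, div_mul_eq_mul_div, div_div,
    mul_comm (((c.blocks.map Nat.factorial).prod : ℕ) : ℚ) ((n.factorial : ℕ) : ℚ),
    mul_div_mul_left _ _ hfac]

lemma comp_q_zero : qq 0 = 1 := by
  rw [qq]
  have hblocks : ∀ c : Composition 0, c.blocks = [] := by
    intro c
    rcases hb : c.blocks with _ | ⟨a, t⟩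
    · rfl
    · exfalso
      have ha : 0 < a := c.blocks_pos (hb ▸ List.mem_cons_self (a := a) (l := t))
      have hs := c.blocks_sum
      rw [hb] at hs
      simp only [List.sum_cons] at hs
      omega
  have hfilter : (Finset.univ.filter
      (fun c : Composition 0 => ∀ k ∈ c.blocks, 2 ≤ k)) = Finset.univ := by
    refine Finset.filter_true_of_mem fun c _ => ?_
    rw [hblocks c]; intro k hk; simp at hk
  have hone : ∀ c : Composition 0, ((c.blocks.map wq).prod) = 1 := by
    intro c; rw [hblocks c]; simp
  rw [hfilter, Finset.sum_congr rfl fun c _ => hone c, Finset.sum_const,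
    Finset.card_univ, composition_card]
  simp

/-- split a composition into its first block and the rest -/
def splitComp (n : ℕ) (c : Composition n) : Σ k : ℕ, Composition (n - k) :=
  ⟨c.blocks.headI,
   ⟨c.blocks.tail,
    by intro i hi; exact c.blocks_pos (List.mem_of_mem_tail hi),
    by
      have h := c.blocks_sum
      rcases hb : c.blocks with _ | ⟨a, t⟩
      · simp_all
      · rw [hb] at h
        simp only [List.sum_cons] at h
        simp only [List.tail_cons, List.headI_cons]
        omega⟩⟩

/-- prepend a block to a composition -/
def consComp (n k : ℕ) (hk : 0 < k) (hkn : k ≤ n) (c : Composition (n - k)) :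
    Composition n :=
  ⟨k :: c.blocks,
   by intro i hi
      rcases List.mem_cons.1 hi with h | h
      · omega
      · exact c.blocks_pos h,
   by simp [c.blocks_sum]; omega⟩

lemma comp_q_rec (n : ℕ) (hn : 1 ≤ n) :
    qq n = ∑ k ∈ Finset.Icc 2 n, wq k * qq (n - k) := by
  have hrhs : ∑ k ∈ Finset.Icc 2 n, wq k * qq (n - k) =
      ∑ p ∈ (Finset.Icc 2 n).sigma (fun k =>
          Finset.univ.filter (fun c : Composition (n - k) => ∀ j ∈ c.blocks, 2 ≤ j)),
        wq p.1 * (p.2.blocks.map wq).prod := by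
    rw [Finset.sum_sigma]
    refine Finset.sum_congr rfl fun k _ => ?_
    rw [qq, Finset.mul_sum]
  rw [hrhs, qq]
  refine Finset.sum_bij'
    (fun c _ => splitComp n c)
    (fun p hp => consComp n p.1
      (by have := (Finset.mem_sigma.1 hp).1; rw [Finset.mem_Icc] at this; omega)
      (by have := (Finset.mem_sigma.1 hp).1; rw [Finset.mem_Icc] at this; omega)
      p.2)
    ?_ ?_ ?_ ?_ ?_
  · -- hi : splitComp lands in the sigma set
    intro c hc
    have hc' : ∀ k ∈ c.blocks, 2 ≤ k := (Finset.mem_filter.1 hc).2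
    rw [Finset.mem_sigma]
    have hne : c.blocks ≠ [] := by
      intro h
      have := c.blocks_sum
      rw [h] at this
      simp at this
      omega
    rcases hb : c.blocks with _ | ⟨a, t⟩
    · exact absurd hb hne
    constructor
    · rw [Finset.mem_Icc]
      have h2 : 2 ≤ a := hc' a (hb ▸ List.mem_cons_self (a := a) (l := t))
      have hs := c.blocks_sum
      rw [hb] at hs
      simp only [List.sum_cons] at hs
      constructor
      · simpa [splitComp, hb] using h2
      · simp only [splitComp, hb, List.headI_cons]
        omega
    · rw [Finset.mem_filter]
      refine ⟨Finset.mem_univ _, fun j hj => ?_⟩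
      simp only [splitComp] at hj
      exact hc' j (List.mem_of_mem_tail hj)
  · -- hj : consComp lands in the filter
    rintro ⟨k, c⟩ hp
    rw [Finset.mem_sigma] at hp
    have hk := Finset.mem_Icc.1 hp.1
    have hc' : ∀ j ∈ c.blocks, 2 ≤ j := (Finset.mem_filter.1 hp.2).2
    rw [Finset.mem_filter]
    refine ⟨Finset.mem_univ _, fun j hj => ?_⟩
    simp only [consComp] at hj
    rcases List.mem_cons.1 hj with h | h
    · exact h ▸ hk.1
    · exact hc' j h
  · -- left_inv
    intro c hc
    have hne : c.blocks ≠ [] := by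
      intro h
      have := c.blocks_sum
      rw [h] at this
      simp at this
      omega
    apply Composition.ext
    show c.blocks.headI :: c.blocks.tail = c.blocks
    rcases hb : c.blocks with _ | ⟨a, t⟩
    · exact absurd hb hne
    · simp
  · -- right_inv
    rintro ⟨k, c⟩ hp
    refine Sigma.ext rfl (heq_of_eq ?_)
    apply Composition.ext
    rfl
  · -- values match
    intro c hc
    have hne : c.blocks ≠ [] := by
      intro h
      have := c.blocks_sum
      rw [h] at this
      simp at this
      omega
    rcases hb : c.blocks with _ | ⟨a, t⟩
    · exact absurd hb hne
    simp [splitComp, hb]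

/-- the power series `A(x) = ∑_{k≥2} (k-1) x^k / k!` -/
noncomputable def aA : ℚ⟦X⟧ := PowerSeries.mk fun k => if 2 ≤ k then wq k else 0

lemma B_eq : ((1 - X) * exp ℚ : ℚ⟦X⟧) = 1 - aA := by
  ext n
  have hring : ((1 - X) * exp ℚ : ℚ⟦X⟧) = exp ℚ - exp ℚ * X := by ring
  rw [hring, map_sub, map_sub]
  rcases n with _ | m
  · simp [coeff_zero_mul_X, coeff_exp, aA, coeff_mk]
  · rw [coeff_succ_mul_X]
    simp only [coeff_exp, Algebra.algebraMap_self, RingHom.id_apply, aA, coeff_mk,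
      PowerSeries.coeff_one, Nat.succ_ne_zero, if_false]
    rcases m with _ | m
    · norm_num [Nat.factorial]
    · rw [if_pos (by omega : 2 ≤ m + 1 + 1)]
      have h1 : (((m + 1).factorial : ℕ) : ℚ) ≠ 0 := by
        exact_mod_cast (m + 1).factorial_pos.ne'
      have hf : (((m + 1 + 1).factorial : ℕ) : ℚ) = ((m : ℚ) + 2) * ((m + 1).factorial : ℕ) := by
        rw [Nat.factorial_succ]; push_cast; ring
      have h2 : ((m : ℚ) + 2) ≠ 0 := by positivity
      rw [wq, hf]
      push_cast
      field_simp
      ring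

lemma mk_one_mul : (PowerSeries.mk (fun _ => (1 : ℚ)) * (1 - X) : ℚ⟦X⟧) = 1 := by
  ext n
  rw [mul_sub, mul_one, map_sub]
  rcases n with _ | m
  · simp [coeff_zero_mul_X, coeff_mk]
  · simp [coeff_succ_mul_X, coeff_mk, PowerSeries.coeff_one]

lemma exp_mul_rescale : (exp ℚ * rescale (-1 : ℚ) (exp ℚ) : ℚ⟦X⟧) = 1 :=
  exp_mul_exp_neg_eq_one

lemma mk_qq_mul : (PowerSeries.mk (fun n => qq n) * ((1 - X) * exp ℚ) : ℚ⟦X⟧) = 1 := by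
  rw [B_eq, mul_sub, mul_one]
  ext n
  rw [map_sub]
  have hcoeff : PowerSeries.coeff n (PowerSeries.mk (fun n => qq n) * aA) =
      ∑ k ∈ Finset.range (n + 1), (if 2 ≤ k then wq k else 0) * qq (n - k) := by
    rw [mul_comm, PowerSeries.coeff_mul, Finset.Nat.sum_antidiagonal_eq_sum_range_succ_mk]
    refine Finset.sum_congr rfl fun k _ => ?_
    simp [aA, coeff_mk]
  rw [hcoeff, coeff_mk]
  rcases n with _ | m
  · simp [comp_q_zero]
  · have hsub : ∑ k ∈ Finset.range (m + 1 + 1), (if 2 ≤ k then wq k else 0) * qq (m + 1 - k) =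
        ∑ k ∈ Finset.Icc 2 (m + 1), wq k * qq (m + 1 - k) := by
      have h1 : ∑ k ∈ Finset.range (m + 1 + 1), (if 2 ≤ k then wq k else 0) * qq (m + 1 - k) =
          ∑ k ∈ Finset.Icc 2 (m + 1), (if 2 ≤ k then wq k else 0) * qq (m + 1 - k) := by
        refine (Finset.sum_subset (fun k hk => ?_) (fun k hk1 hk2 => ?_)).symm
        · have := (Finset.mem_Icc.1 hk).2
          exact Finset.mem_range.2 (by omega)
        · have hr := Finset.mem_range.1 hk1
          have hI : ¬ (2 ≤ k ∧ k ≤ m + 1) := fun h => hk2 (Finset.mem_Icc.2 h)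
          rw [if_neg (by omega), zero_mul]
      rw [h1]
      refine Finset.sum_congr rfl fun k hk => ?_
      rw [if_pos (Finset.mem_Icc.1 hk).1]
    rw [hsub, ← comp_q_rec (m + 1) (by omega)]
    simp [PowerSeries.coeff_one]

theorem egf_compositionCount_eq :
    (PowerSeries.mk fun n => (compositionCount n : ℚ) / (n.factorial : ℚ)) =
      PowerSeries.rescale (-1 : ℚ) (PowerSeries.exp ℚ) *
        PowerSeries.mk (fun _ => (1 : ℚ)) := by
  have hmk : (PowerSeries.mk fun n => (compositionCount n : ℚ) / (n.factorial : ℚ)) =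
      PowerSeries.mk (fun n => qq n) :=
    congrArg PowerSeries.mk (funext compositionCount_div)
  have hB : ((1 - X) * exp ℚ : ℚ⟦X⟧) ≠ 0 := by
    intro h
    have := congrArg (PowerSeries.constantCoeff) h
    simp [constantCoeff_exp] at this
  apply mul_right_cancel₀ hB
  rw [hmk, mk_qq_mul]
  have : (rescale (-1 : ℚ) (exp ℚ) * PowerSeries.mk (fun _ => (1 : ℚ)) * ((1 - X) * exp ℚ) : ℚ⟦X⟧)
      = (exp ℚ * rescale (-1 : ℚ) (exp ℚ)) * (PowerSeries.mk (fun _ => (1 : ℚ)) * (1 - X)) := by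
    ring
  rw [this, exp_mul_rescale, mk_one_mul, one_mul]
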